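/- Let x₁,…,xₙ ∈ ℝᵈ (not all equal) satisfy the ℓ₂² triangle inequalities. Define the probability distribution p_{kl} = ‖xₖ−xₗ‖² / Σ_{i<j}‖xᵢ−xⱼ‖² and P = Σ_{k<l} p_{kl}(xₖ−xₗ)(xₖ−xₗ)ᵀ. Then the embedding g(xᵢ) = P^{1/2}xᵢ satisfies Σ_{i<j} ‖g(xᵢ)−g(xⱼ)‖ ≥ (1/√d) Σ_{i<j} ‖xᵢ−xⱼ‖², i.e., it has average distortion at most √d. -/

import Mathlib

set_option maxHeartbeats 1000000

open Matrix Finset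

open scoped ComplexOrder in
/-- The older Mathlib's `Matrix.PosSemidef.sqrt` (removed since), with its old definition. -/
noncomputable def Matrix.PosSemidef.sqrt {n 𝕜 : Type*} [Fintype n] [RCLike 𝕜] [DecidableEq n]
    {A : Matrix n n 𝕜} (hA : A.PosSemidef) : Matrix n n 𝕜 :=
  hA.1.eigenvectorUnitary.1 * diagonal ((↑) ∘ (√·) ∘ hA.1.eigenvalues) *
  (star hA.1.eigenvectorUnitary : Matrix n n 𝕜)

lemma my_sqrt_mul_self {d : ℕ} {A : Matrix (Fin d) (Fin d) ℝ} (hA : A.PosSemidef) :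
    hA.sqrt * hA.sqrt = A := by
  have hU : (star hA.1.eigenvectorUnitary : Matrix (Fin d) (Fin d) ℝ) *
      hA.1.eigenvectorUnitary.1 = 1 := Unitary.coe_star_mul_self _
  have hspec := hA.1.spectral_theorem
  rw [Unitary.conjStarAlgAut_apply] at hspec
  conv_rhs => rw [hspec]
  simp only [Matrix.PosSemidef.sqrt]
  calc _ = (hA.1.eigenvectorUnitary.1 : Matrix (Fin d) (Fin d) ℝ) *
      (diagonal ((RCLike.ofReal : ℝ → ℝ) ∘ (√·) ∘ hA.1.eigenvalues) *
        ((star hA.1.eigenvectorUnitary : Matrix (Fin d) (Fin d) ℝ) *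
      hA.1.eigenvectorUnitary.1) * diagonal ((RCLike.ofReal : ℝ → ℝ) ∘ (√·) ∘ hA.1.eigenvalues)) *
      (star hA.1.eigenvectorUnitary : Matrix (Fin d) (Fin d) ℝ) := by
        simp only [Matrix.mul_assoc]
    _ = _ := by
        rw [hU, Matrix.mul_one, diagonal_mul_diagonal]
        congr 3
        funext i
        simp [Real.mul_self_sqrt (hA.eigenvalues_nonneg i)]

lemma my_sqrt_isHermitian {d : ℕ} {A : Matrix (Fin d) (Fin d) ℝ} (hA : A.PosSemidef) :
    hA.sqrt.IsHermitian := by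
  unfold Matrix.IsHermitian Matrix.PosSemidef.sqrt
  rw [conjTranspose_mul, conjTranspose_mul, diagonal_conjTranspose, Matrix.star_eq_conjTranspose,
    conjTranspose_conjTranspose, Matrix.mul_assoc]
  congr 2

lemma my_sqrt_add_le (a b : ℝ) (ha : 0 ≤ a) (hb : 0 ≤ b) :
    Real.sqrt (a + b) ≤ Real.sqrt a + Real.sqrt b := by
  have h : a + b ≤ (Real.sqrt a + Real.sqrt b) ^ 2 := by
    have := Real.sq_sqrt ha
    have := Real.sq_sqrt hb
    nlinarith [Real.sqrt_nonneg a, Real.sqrt_nonneg b]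
  calc Real.sqrt (a + b) ≤ Real.sqrt ((Real.sqrt a + Real.sqrt b) ^ 2) := Real.sqrt_le_sqrt h
    _ = Real.sqrt a + Real.sqrt b := by
        rw [Real.sqrt_sq (by positivity)]

lemma my_mulVec_dot {d : ℕ} (A : Matrix (Fin d) (Fin d) ℝ) (u v : Fin d → ℝ) :
    (A *ᵥ u) ⬝ᵥ v = u ⬝ᵥ (Aᵀ *ᵥ v) := by
  rw [dotProduct_comm, dotProduct_mulVec, ← transpose_transpose A, vecMul_transpose,
    transpose_transpose, dotProduct_comm]

lemma my_dot_CS {d : ℕ} (u v : Fin d → ℝ) :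
    u ⬝ᵥ v ≤ Real.sqrt (u ⬝ᵥ u) * Real.sqrt (v ⬝ᵥ v) := by
  have h := Real.sum_mul_le_sqrt_mul_sqrt Finset.univ u v
  simpa [dotProduct, pow_two] using h

lemma my_trace_mul_vecMulVec {d : ℕ} (B : Matrix (Fin d) (Fin d) ℝ) (u v : Fin d → ℝ) :
    (B * vecMulVec u v).trace = v ⬝ᵥ (B *ᵥ u) := by
  simp only [Matrix.trace, Matrix.diag, Matrix.mul_apply, Matrix.vecMulVec_apply,
    dotProduct, Matrix.mulVec, Finset.mul_sum]
  apply Finset.sum_congr rfl; intro i _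
  apply Finset.sum_congr rfl; intro j _
  ring

lemma my_cs_posdef {d : ℕ} {Q : Matrix (Fin d) (Fin d) ℝ} (hQ : Q.PosDef) (y : Fin d → ℝ) :
    y ⬝ᵥ y ≤ Real.sqrt (y ⬝ᵥ Q *ᵥ y) * Real.sqrt (y ⬝ᵥ Q⁻¹ *ᵥ y) := by
  set R := hQ.posSemidef.sqrt with hRdef
  have hR : R * R = Q := my_sqrt_mul_self hQ.posSemidef
  have hRsym : Rᵀ = R := by
    have h := my_sqrt_isHermitian hQ.posSemidef
    rwa [Matrix.IsHermitian, conjTranspose_eq_transpose_of_trivial] at h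
  have hQQ : Q * Q⁻¹ = 1 := Matrix.mul_nonsing_inv _ hQ.det_pos.ne'.isUnit
  have huw : (R *ᵥ y) ⬝ᵥ (R *ᵥ (Q⁻¹ *ᵥ y)) = y ⬝ᵥ y := by
    rw [my_mulVec_dot, hRsym, mulVec_mulVec, hR, mulVec_mulVec, hQQ, one_mulVec]
  have huu : (R *ᵥ y) ⬝ᵥ (R *ᵥ y) = y ⬝ᵥ Q *ᵥ y := by
    rw [my_mulVec_dot, hRsym, mulVec_mulVec, hR]
  have hww : (R *ᵥ (Q⁻¹ *ᵥ y)) ⬝ᵥ (R *ᵥ (Q⁻¹ *ᵥ y)) = y ⬝ᵥ Q⁻¹ *ᵥ y := by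
    rw [my_mulVec_dot, hRsym, mulVec_mulVec, hR, mulVec_mulVec, hQQ, one_mulVec,
      dotProduct_comm]
  calc y ⬝ᵥ y = (R *ᵥ y) ⬝ᵥ (R *ᵥ (Q⁻¹ *ᵥ y)) := huw.symm
    _ ≤ _ := by rw [← huu, ← hww]; exact my_dot_CS _ _

lemma my_main {d : ℕ} {ι : Type*} [Fintype ι] (y : ι → Fin d → ℝ)
    (P : Matrix (Fin d) (Fin d) ℝ) (hP : P.PosSemidef) (hd : 0 < d)
    (hS : 0 < ∑ r : ι, y r ⬝ᵥ y r)
    (hPdef : P = ∑ q : ι, ((y q ⬝ᵥ y q) / ∑ r : ι, y r ⬝ᵥ y r) • vecMulVec (y q) (y q)) :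
    ∑ q : ι, Real.sqrt ((hP.sqrt *ᵥ y q) ⬝ᵥ (hP.sqrt *ᵥ y q)) ≥
      (1 / Real.sqrt d) * ∑ q : ι, y q ⬝ᵥ y q := by
  classical
  set S : ℝ := ∑ r : ι, y r ⬝ᵥ y r with hSdef
  have hs0 : ∀ q : ι, 0 ≤ y q ⬝ᵥ y q := fun q =>
    Finset.sum_nonneg (fun i _ => mul_self_nonneg (y q i))
  have hsd : (0:ℝ) < Real.sqrt d := Real.sqrt_pos.2 (by exact_mod_cast hd)
  have hz0 : ∀ q : ι, 0 ≤ (hP.sqrt *ᵥ y q) ⬝ᵥ (hP.sqrt *ᵥ y q) := fun q =>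
    Finset.sum_nonneg (fun i _ => mul_self_nonneg _)
  have hsym : hP.sqrtᵀ = hP.sqrt := by
    have h := my_sqrt_isHermitian hP
    rwa [Matrix.IsHermitian, conjTranspose_eq_transpose_of_trivial] at h
  have hA2 : ∀ q : ι, (hP.sqrt *ᵥ y q) ⬝ᵥ (hP.sqrt *ᵥ y q) = y q ⬝ᵥ P *ᵥ y q := by
    intro q
    rw [my_mulVec_dot, hsym, mulVec_mulVec, my_sqrt_mul_self hP]
  set A : ι → ℝ := fun q => Real.sqrt ((hP.sqrt *ᵥ y q) ⬝ᵥ (hP.sqrt *ᵥ y q)) with hAdef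
  have hA0 : ∀ q, 0 ≤ A q := fun q => Real.sqrt_nonneg _
  have key : ∀ δ : ℝ, 0 < δ →
      (1 / Real.sqrt d) * S ≤ (∑ q, A q) + Real.sqrt δ * ∑ q, Real.sqrt (y q ⬝ᵥ y q) := by
    intro δ hδ
    set Q : Matrix (Fin d) (Fin d) ℝ := P + δ • 1 with hQdef
    have hδ1 : ((δ : ℝ) • (1 : Matrix (Fin d) (Fin d) ℝ)).PosDef := by
      rw [smul_one_eq_diagonal]
      exact Matrix.PosDef.diagonal (fun _ => hδ)
    have hQ : Q.PosDef := Matrix.PosDef.posSemidef_add hP hδ1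
    have hQinv : Q⁻¹.PosDef := hQ.inv
    set t : ι → ℝ := fun q => y q ⬝ᵥ Q⁻¹ *ᵥ y q with htdef
    have ht0 : ∀ q, 0 ≤ t q := by
      intro q
      have h := hQinv.posSemidef.dotProduct_mulVec_nonneg (y q)
      simpa [htdef] using h
    have htpos : ∀ q, y q ⬝ᵥ y q ≠ 0 → 0 < t q := by
      intro q hq
      have hy0 : y q ≠ 0 := fun h => hq (by simp [h])
      have h := hQinv.dotProduct_mulVec_pos hy0
      simpa [htdef] using h
    have keyq : ∀ q, (y q ⬝ᵥ y q) / Real.sqrt (t q) ≤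
        A q + Real.sqrt δ * Real.sqrt (y q ⬝ᵥ y q) := by
      intro q
      rcases eq_or_ne (y q ⬝ᵥ y q) 0 with h0 | h0
      · rw [h0]
        simp only [zero_div]
        exact add_nonneg (hA0 q) (by positivity)
      · have htq := htpos q h0
        have hcs := my_cs_posdef hQ (y q)
        have hyQy : y q ⬝ᵥ Q *ᵥ y q =
            (hP.sqrt *ᵥ y q) ⬝ᵥ (hP.sqrt *ᵥ y q) + δ * (y q ⬝ᵥ y q) := by
          rw [hA2 q, hQdef, add_mulVec, dotProduct_add, smul_mulVec, one_mulVec,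
            dotProduct_smul, smul_eq_mul]
        have h1 : Real.sqrt (y q ⬝ᵥ Q *ᵥ y q) ≤ A q + Real.sqrt δ * Real.sqrt (y q ⬝ᵥ y q) := by
          rw [hyQy]
          calc Real.sqrt ((hP.sqrt *ᵥ y q) ⬝ᵥ (hP.sqrt *ᵥ y q) + δ * (y q ⬝ᵥ y q)) ≤
              Real.sqrt ((hP.sqrt *ᵥ y q) ⬝ᵥ (hP.sqrt *ᵥ y q)) + Real.sqrt (δ * (y q ⬝ᵥ y q)) :=
                my_sqrt_add_le _ _ (hz0 q) (mul_nonneg hδ.le (hs0 q))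
            _ = A q + Real.sqrt δ * Real.sqrt (y q ⬝ᵥ y q) := by
                rw [Real.sqrt_mul hδ.le]
        have h2 : (y q ⬝ᵥ y q) / Real.sqrt (t q) ≤ Real.sqrt (y q ⬝ᵥ Q *ᵥ y q) := by
          rw [div_le_iff₀ (Real.sqrt_pos.2 htq)]
          exact hcs
        exact h2.trans h1
    set X : ℝ := ∑ q, (y q ⬝ᵥ y q) / Real.sqrt (t q) with hXdef
    set Y : ℝ := ∑ q, (y q ⬝ᵥ y q) * Real.sqrt (t q) with hYdef
    have hX0 : 0 ≤ X := Finset.sum_nonneg fun q _ => div_nonneg (hs0 q) (Real.sqrt_nonneg _)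
    have hY0 : 0 ≤ Y := Finset.sum_nonneg fun q _ => mul_nonneg (hs0 q) (Real.sqrt_nonneg _)
    have hb : S ^ 2 ≤ X * Y := by
      have h := Finset.sum_mul_sq_le_sq_mul_sq Finset.univ
        (fun q => Real.sqrt ((y q ⬝ᵥ y q) / Real.sqrt (t q)))
        (fun q => Real.sqrt ((y q ⬝ᵥ y q) * Real.sqrt (t q)))
      have hfg : ∀ q : ι, Real.sqrt ((y q ⬝ᵥ y q) / Real.sqrt (t q)) *
          Real.sqrt ((y q ⬝ᵥ y q) * Real.sqrt (t q)) = y q ⬝ᵥ y q := by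
        intro q
        rw [← Real.sqrt_mul (div_nonneg (hs0 q) (Real.sqrt_nonneg _))]
        rcases eq_or_ne (y q ⬝ᵥ y q) 0 with h0 | h0
        · rw [h0]; simp
        · have htq := Real.sqrt_pos.2 (htpos q h0)
          have he : (y q ⬝ᵥ y q) / Real.sqrt (t q) * ((y q ⬝ᵥ y q) * Real.sqrt (t q)) =
              (y q ⬝ᵥ y q) ^ 2 := by
            field_simp
          rw [he, Real.sqrt_sq (hs0 q)]
      calc S ^ 2 = (∑ q : ι, Real.sqrt ((y q ⬝ᵥ y q) / Real.sqrt (t q)) *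
            Real.sqrt ((y q ⬝ᵥ y q) * Real.sqrt (t q))) ^ 2 := by
            rw [hSdef]
            congr 1
            exact (Finset.sum_congr rfl fun q _ => hfg q).symm
        _ ≤ (∑ q : ι, Real.sqrt ((y q ⬝ᵥ y q) / Real.sqrt (t q)) ^ 2) *
            ∑ q : ι, Real.sqrt ((y q ⬝ᵥ y q) * Real.sqrt (t q)) ^ 2 := h
        _ = X * Y := by
            rw [hXdef, hYdef]
            congr 1
            · exact Finset.sum_congr rfl fun q _ =>
                Real.sq_sqrt (div_nonneg (hs0 q) (Real.sqrt_nonneg _))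
            · exact Finset.sum_congr rfl fun q _ =>
                Real.sq_sqrt (mul_nonneg (hs0 q) (Real.sqrt_nonneg _))
    have hc : Y ^ 2 ≤ S * ∑ q : ι, (y q ⬝ᵥ y q) * t q := by
      have h := Finset.sum_mul_sq_le_sq_mul_sq Finset.univ
        (fun q => Real.sqrt (y q ⬝ᵥ y q))
        (fun q => Real.sqrt ((y q ⬝ᵥ y q) * t q))
      have hfg : ∀ q : ι, Real.sqrt (y q ⬝ᵥ y q) * Real.sqrt ((y q ⬝ᵥ y q) * t q) =
          (y q ⬝ᵥ y q) * Real.sqrt (t q) := by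
        intro q
        rw [← Real.sqrt_mul (hs0 q), ← mul_assoc, ← pow_two,
          Real.sqrt_mul (sq_nonneg _), Real.sqrt_sq (hs0 q)]
      calc Y ^ 2 = (∑ q : ι, Real.sqrt (y q ⬝ᵥ y q) * Real.sqrt ((y q ⬝ᵥ y q) * t q)) ^ 2 := by
            rw [hYdef]
            congr 1
            exact (Finset.sum_congr rfl fun q _ => hfg q).symm
        _ ≤ (∑ q : ι, Real.sqrt (y q ⬝ᵥ y q) ^ 2) *
            ∑ q : ι, Real.sqrt ((y q ⬝ᵥ y q) * t q) ^ 2 := h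
        _ = S * ∑ q : ι, (y q ⬝ᵥ y q) * t q := by
            rw [hSdef]
            congr 1
            · exact Finset.sum_congr rfl fun q _ => Real.sq_sqrt (hs0 q)
            · exact Finset.sum_congr rfl fun q _ =>
                Real.sq_sqrt (mul_nonneg (hs0 q) (ht0 q))
    have hdS : ∑ q : ι, (y q ⬝ᵥ y q) * t q ≤ d * S := by
      have htr : ∑ q : ι, (y q ⬝ᵥ y q) * t q = S * (Q⁻¹ * P).trace := by
        rw [hPdef, Matrix.mul_sum, trace_sum]
        simp_rw [Matrix.mul_smul, trace_smul, my_trace_mul_vecMulVec, smul_eq_mul]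
        rw [Finset.mul_sum]
        apply Finset.sum_congr rfl
        intro q _
        have ht : t q = y q ⬝ᵥ Q⁻¹ *ᵥ y q := rfl
        rw [ht]
        have hSne : S ≠ 0 := hS.ne'
        field_simp
      have hQQ : Q⁻¹ * Q = 1 := Matrix.nonsing_inv_mul _ hQ.det_pos.ne'.isUnit
      have htrinv : 0 ≤ Q⁻¹.trace := by
        rw [Matrix.trace]
        apply Finset.sum_nonneg
        intro i _
        have h := hQinv.posSemidef.dotProduct_mulVec_nonneg (Pi.single i 1)
        simpa [Matrix.diag, mulVec_single, dotProduct_single, single_dotProduct] using h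
      have htrP : (Q⁻¹ * P).trace ≤ (d : ℝ) := by
        have hPQ : P = Q - δ • 1 := by rw [hQdef, add_sub_cancel_right]
        rw [hPQ, Matrix.mul_sub, trace_sub, hQQ, trace_one, Matrix.mul_smul, mul_one,
          trace_smul, smul_eq_mul]
        have : 0 ≤ δ * Q⁻¹.trace := mul_nonneg hδ.le htrinv
        simp only [Fintype.card_fin]
        linarith
      rw [htr]
      calc S * (Q⁻¹ * P).trace ≤ S * d := by
            exact mul_le_mul_of_nonneg_left htrP hS.le
        _ = d * S := by ring
    have hYd : Y ≤ Real.sqrt d * S := by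
      have h1 : Y ^ 2 ≤ (Real.sqrt d * S) ^ 2 := by
        have h2 : (Real.sqrt d * S) ^ 2 = d * S ^ 2 := by
          rw [mul_pow, Real.sq_sqrt (Nat.cast_nonneg d)]
        rw [h2]
        have h3 : S * ∑ q : ι, (y q ⬝ᵥ y q) * t q ≤ S * (d * S) :=
          mul_le_mul_of_nonneg_left hdS hS.le
        nlinarith
      exact (pow_le_pow_iff_left₀ hY0 (by positivity) two_ne_zero).mp h1
    have hXS : S ≤ Real.sqrt d * X := by
      have h1 : X * Y ≤ X * (Real.sqrt d * S) := mul_le_mul_of_nonneg_left hYd hX0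
      nlinarith
    have hXle : X ≤ (∑ q, A q) + Real.sqrt δ * ∑ q, Real.sqrt (y q ⬝ᵥ y q) := by
      calc X ≤ ∑ q, (A q + Real.sqrt δ * Real.sqrt (y q ⬝ᵥ y q)) :=
            Finset.sum_le_sum fun q _ => keyq q
        _ = _ := by rw [Finset.sum_add_distrib, ← Finset.mul_sum]
    have hfin : (1 / Real.sqrt d) * S ≤ X := by
      rw [div_mul_eq_mul_div, one_mul, div_le_iff₀ hsd]
      linarith
    linarith
  rw [ge_iff_le]
  by_contra hcon
  push_neg at hcon
  set T : ℝ := ∑ q, Real.sqrt (y q ⬝ᵥ y q) with hTdef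
  have hT0 : 0 ≤ T := Finset.sum_nonneg fun q _ => Real.sqrt_nonneg _
  set ε : ℝ := (1 / Real.sqrt d) * S - ∑ q, A q with hεdef
  have hε : 0 < ε := by rw [hεdef]; linarith
  have hδpos : (0:ℝ) < (ε / (T + 1)) ^ 2 := pow_pos (div_pos hε (by linarith)) 2
  have hk := key _ hδpos
  have hsq : Real.sqrt ((ε / (T + 1)) ^ 2) = ε / (T + 1) := Real.sqrt_sq (div_nonneg hε.le (by linarith))
  rw [hsq] at hk
  have hTle : ε / (T + 1) * T < ε := by
    rw [div_mul_eq_mul_div, div_lt_iff₀ (by linarith)]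
    nlinarith
  linarith

/-- Average-distortion `√d` version of Goemans' theorem via the squared-length
distribution `p_{kl} ∝ ‖xₖ−xₗ‖²`, with `g(xᵢ) = P^{1/2}xᵢ`. -/
theorem stmt10 (n d : ℕ) (x : Fin n → Fin d → ℝ)
    (htri : ∀ i j k, (x i - x j) ⬝ᵥ (x i - x j) + (x j - x k) ⬝ᵥ (x j - x k) ≥
      (x i - x k) ⬝ᵥ (x i - x k))
    (hne : ∃ i j, x i ≠ x j)
    (p : Fin n → Fin n → ℝ)
    (hpdef : ∀ k l, p k l = ((x k - x l) ⬝ᵥ (x k - x l)) /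
      ∑ q : {q : Fin n × Fin n // q.1 < q.2}, (x q.1.1 - x q.1.2) ⬝ᵥ (x q.1.1 - x q.1.2))
    (P : Matrix (Fin d) (Fin d) ℝ)
    (hPdef : P = ∑ q : {q : Fin n × Fin n // q.1 < q.2},
      p q.1.1 q.1.2 • vecMulVec (x q.1.1 - x q.1.2) (x q.1.1 - x q.1.2))
    (hP : P.PosSemidef) :
    ∑ q : {q : Fin n × Fin n // q.1 < q.2},
        Real.sqrt (hP.sqrt.mulVec (x q.1.1 - x q.1.2) ⬝ᵥ hP.sqrt.mulVec (x q.1.1 - x q.1.2)) ≥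
      (1 / Real.sqrt d) * ∑ q : {q : Fin n × Fin n // q.1 < q.2},
        (x q.1.1 - x q.1.2) ⬝ᵥ (x q.1.1 - x q.1.2) := by
  obtain ⟨i, j, hij⟩ := hne
  have hd : 0 < d := by
    rcases Nat.eq_zero_or_pos d with h | h
    · exfalso; subst h; exact hij (funext fun a => a.elim0)
    · exact h
  have hpos : ∀ (k l : Fin n), x k ≠ x l → 0 < (x k - x l) ⬝ᵥ (x k - x l) := by
    intro k l hkl
    have h0 : x k - x l ≠ 0 := sub_ne_zero.mpr hkl
    have h1 : (x k - x l) ⬝ᵥ (x k - x l) ≠ 0 := fun h => h0 (dotProduct_self_eq_zero.mp h)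
    have h2 : 0 ≤ (x k - x l) ⬝ᵥ (x k - x l) :=
      Finset.sum_nonneg fun a _ => mul_self_nonneg ((x k - x l) a)
    exact lt_of_le_of_ne h2 (Ne.symm h1)
  have hnonneg : ∀ q : {q : Fin n × Fin n // q.1 < q.2},
      0 ≤ (x q.1.1 - x q.1.2) ⬝ᵥ (x q.1.1 - x q.1.2) := fun q =>
    Finset.sum_nonneg fun a _ => mul_self_nonneg _
  have hS : 0 < ∑ q : {q : Fin n × Fin n // q.1 < q.2},
      (x q.1.1 - x q.1.2) ⬝ᵥ (x q.1.1 - x q.1.2) := by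
    have hij' : i ≠ j := fun h => hij (by rw [h])
    rcases lt_or_gt_of_ne hij' with h | h
    · exact Finset.sum_pos' (fun q _ => hnonneg q)
        ⟨⟨(i, j), h⟩, Finset.mem_univ _, hpos i j hij⟩
    · exact Finset.sum_pos' (fun q _ => hnonneg q)
        ⟨⟨(j, i), h⟩, Finset.mem_univ _, hpos j i (fun h' => hij h'.symm)⟩
  have hPdef' : P = ∑ q : {q : Fin n × Fin n // q.1 < q.2},
      (((x q.1.1 - x q.1.2) ⬝ᵥ (x q.1.1 - x q.1.2)) /
        ∑ r : {q : Fin n × Fin n // q.1 < q.2}, (x r.1.1 - x r.1.2) ⬝ᵥ (x r.1.1 - x r.1.2)) •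
        vecMulVec (x q.1.1 - x q.1.2) (x q.1.1 - x q.1.2) := by
    rw [hPdef]
    exact Finset.sum_congr rfl fun q _ => by rw [hpdef]
  have H := my_main (fun q : {q : Fin n × Fin n // q.1 < q.2} => x q.1.1 - x q.1.2) P hP hd hS
    (by beta_reduce; exact hPdef')
  beta_reduce at H
  exact H
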